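/- Let B = [W, T] ∈ ℝ^{m×s} have rank s, and suppose G ∈ ℝ^{s×n} has columns in Δ^s and satisfies ‖m'_j − (B + N_B)G(:,j)‖₂ ≤ ε + ε̄ for all j, where m'_j = B f_j + n_j with f_j ∈ Δ^s, ‖n_j‖₂ ≤ ε and every column of N_B has norm at most ε̄. Then for any index i and column j such that f_j(i) = 0, it holds that G(i,j) ≤ 2(ε̄ + ε)/σ_s(B). -/

import Mathlib

/-- The smallest singular value of the matrix with columns `b i`. -/
noncomputable def sigmaMinE {m s : ℕ} (b : Fin s → EuclideanSpace ℝ (Fin m)) : ℝ :=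
  ⨅ x : {x : Fin s → ℝ // ∑ i, x i ^ 2 = 1}, ‖∑ i, x.1 i • b i‖

lemma sigmaMinE_pos {m s : ℕ} (b : Fin s → EuclideanSpace ℝ (Fin m))
    (hb : LinearIndependent ℝ b) (hs : Nonempty (Fin s)) : 0 < sigmaMinE b := by
  obtain ⟨i0⟩ := hs
  set S : Set (Fin s → ℝ) := {x | ∑ i, x i ^ 2 = 1} with hS
  have hfne : S.Nonempty := by
    refine ⟨Pi.single i0 1, ?_⟩
    simp [S, Pi.single_apply, apply_ite (· ^ 2)]
  have hfcont : Continuous fun x : Fin s → ℝ => ‖∑ i, x i • b i‖ := by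
    exact (continuous_finset_sum _ fun i _ => (continuous_apply i).smul continuous_const).norm
  have hclosed : IsClosed S := isClosed_eq (by continuity) continuous_const
  have hbdd : Bornology.IsBounded S := by
    refine (Metric.isBounded_iff_subset_closedBall 0).mpr ⟨1, fun x hx => ?_⟩
    simp only [Metric.mem_closedBall, dist_zero_right]
    rw [pi_norm_le_iff_of_nonneg (by norm_num)]
    intro i
    have h1 : x i ^ 2 ≤ 1 := by
      rw [← hx]
      exact Finset.single_le_sum (fun a _ => sq_nonneg (x a)) (Finset.mem_univ i)
    rw [Real.norm_eq_abs]
    nlinarith [abs_nonneg (x i), sq_abs (x i)]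
  obtain ⟨x₀, hx₀S, hmin⟩ := (Metric.isCompact_of_isClosed_isBounded hclosed hbdd).exists_isMinOn
    hfne hfcont.continuousOn
  have hx₀ne : (∑ i, x₀ i • b i) ≠ 0 := by
    intro h
    have := (Fintype.linearIndependent_iff.mp hb) x₀ h i0
    have hsum : ∑ i, x₀ i ^ 2 = 1 := hx₀S
    have : ∀ i, x₀ i = 0 := (Fintype.linearIndependent_iff.mp hb) x₀ h
    simp [this] at hsum
  have hpos : 0 < ‖∑ i, x₀ i • b i‖ := norm_pos_iff.mpr hx₀ne
  have : ‖∑ i, x₀ i • b i‖ ≤ sigmaMinE b := by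
    have : Nonempty {x : Fin s → ℝ // ∑ i, x i ^ 2 = 1} := ⟨⟨x₀, hx₀S⟩⟩
    exact le_ciInf fun x => hmin x.2
  linarith

lemma sigmaMinE_key {m s : ℕ} (b : Fin s → EuclideanSpace ℝ (Fin m))
    (hσ : 0 ≤ sigmaMinE b) (x : Fin s → ℝ) :
    sigmaMinE b * Real.sqrt (∑ a, x a ^ 2) ≤ ‖∑ a, x a • b a‖ := by
  set t := Real.sqrt (∑ a, x a ^ 2) with ht
  have hsum0 : 0 ≤ ∑ a, x a ^ 2 := Finset.sum_nonneg fun a _ => sq_nonneg _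
  rcases eq_or_lt_of_le (Real.sqrt_nonneg (∑ a, x a ^ 2)) with h0 | hpos
  · rw [← ht] at h0
    rw [← h0, mul_zero]
    exact norm_nonneg _
  · rw [← ht] at hpos
    set y : Fin s → ℝ := fun a => x a / t with hy
    have hy1 : ∑ a, y a ^ 2 = 1 := by
      show ∑ a, (x a / t) ^ 2 = 1
      simp only [div_pow]
      rw [← Finset.sum_div]
      rw [ht, Real.sq_sqrt hsum0]
      have hpos' : 0 < ∑ a, x a ^ 2 := Real.sqrt_pos.mp (by rw [← ht]; exact hpos)
      exact div_self hpos'.ne'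
    have hbdd : BddBelow (Set.range fun x : {x : Fin s → ℝ // ∑ i, x i ^ 2 = 1} =>
        ‖∑ i, x.1 i • b i‖) := ⟨0, fun w ⟨z, hz⟩ => hz ▸ norm_nonneg _⟩
    have hle : sigmaMinE b ≤ ‖∑ a, y a • b a‖ := ciInf_le hbdd ⟨y, hy1⟩
    have heq : ∑ a, y a • b a = t⁻¹ • ∑ a, x a • b a := by
      rw [Finset.smul_sum]
      refine Finset.sum_congr rfl fun a _ => ?_
      show (x a / t) • b a = t⁻¹ • x a • b a
      rw [div_eq_inv_mul, mul_smul]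
    rw [heq, norm_smul, Real.norm_eq_abs, abs_inv, abs_of_pos hpos] at hle
    rw [mul_comm]
    calc t * sigmaMinE b ≤ t * (t⁻¹ * ‖∑ a, x a • b a‖) := by
          exact mul_le_mul_of_nonneg_left hle hpos.le
      _ = ‖∑ a, x a • b a‖ := by field_simp

/-- entrywise bound on the abundances `G` of the outlier-detection algorithm in
the noisy case: if `f_j(i) = 0` then `G(i,j) ≤ 2(ε̄+ε)/σ_s(B)`. -/
theorem stmt_18 (m s n : ℕ)
    (b : Fin s → EuclideanSpace ℝ (Fin m)) (hb : LinearIndependent ℝ b)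
    (ε εb : ℝ) (hε : 0 ≤ ε) (hεb : 0 ≤ εb)
    (G : Matrix (Fin s) (Fin n) ℝ)
    (hG0 : ∀ a j, 0 ≤ G a j) (hG1 : ∀ j, ∑ a, G a j ≤ 1)
    (NB : Fin s → EuclideanSpace ℝ (Fin m)) (hNB : ∀ a, ‖NB a‖ ≤ εb)
    (fc : Fin n → Fin s → ℝ)
    (hf0 : ∀ j a, 0 ≤ fc j a) (hf1 : ∀ j, ∑ a, fc j a ≤ 1)
    (nv : Fin n → EuclideanSpace ℝ (Fin m)) (hnv : ∀ j, ‖nv j‖ ≤ ε)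
    (M' : Fin n → EuclideanSpace ℝ (Fin m))
    (hM' : ∀ j, M' j = (∑ a, fc j a • b a) + nv j)
    (happrox : ∀ j, ‖M' j - ∑ a, G a j • (b a + NB a)‖ ≤ ε + εb) :
    ∀ i j, fc j i = 0 → G i j ≤ 2 * (εb + ε) / sigmaMinE b := by
  intro i j hfij
  have hσ : 0 < sigmaMinE b := sigmaMinE_pos b hb ⟨i⟩
  set x : Fin s → ℝ := fun a => fc j a - G a j with hx
  set v : EuclideanSpace ℝ (Fin m) := ∑ a, x a • b a with hv
  have hveq : v = (M' j - ∑ a, G a j • (b a + NB a)) - nv j + ∑ a, G a j • NB a := by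
    rw [hv, hM' j]
    simp only [hx, sub_smul, smul_add, Finset.sum_sub_distrib, Finset.sum_add_distrib]
    abel
  have hNBsum : ‖∑ a, G a j • NB a‖ ≤ εb := by
    calc ‖∑ a, G a j • NB a‖ ≤ ∑ a, ‖G a j • NB a‖ := norm_sum_le _ _
      _ ≤ ∑ a, G a j * εb := by
          refine Finset.sum_le_sum fun a _ => ?_
          rw [norm_smul, Real.norm_eq_abs, abs_of_nonneg (hG0 a j)]
          exact mul_le_mul_of_nonneg_left (hNB a) (hG0 a j)
      _ = (∑ a, G a j) * εb := (Finset.sum_mul _ _ _).symm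
      _ ≤ 1 * εb := mul_le_mul_of_nonneg_right (hG1 j) hεb
      _ = εb := one_mul _
  have hvnorm : ‖v‖ ≤ 2 * (εb + ε) := by
    rw [hveq]
    calc ‖(M' j - ∑ a, G a j • (b a + NB a)) - nv j + ∑ a, G a j • NB a‖
        ≤ ‖M' j - ∑ a, G a j • (b a + NB a)‖ + ‖nv j‖ + ‖∑ a, G a j • NB a‖ := by
          refine (norm_add_le _ _).trans ?_
          exact add_le_add (norm_sub_le _ _) le_rfl
      _ ≤ (ε + εb) + ε + εb := add_le_add (add_le_add (happrox j) (hnv j)) hNBsum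
      _ = 2 * (εb + ε) := by ring
  have hGix : G i j ≤ Real.sqrt (∑ a, x a ^ 2) := by
    have h1 : G i j = |x i| := by
      simp [hx, hfij, abs_of_nonneg (hG0 i j)]
    rw [h1, ← Real.sqrt_sq_eq_abs]
    exact Real.sqrt_le_sqrt (Finset.single_le_sum (fun a _ => sq_nonneg (x a))
      (Finset.mem_univ i))
  have hkey := sigmaMinE_key b hσ.le x
  rw [← hv] at hkey
  rw [le_div_iff₀ hσ]
  nlinarith [Real.sqrt_nonneg (∑ a, x a ^ 2)]
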